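/- Let f : ℝ → ℝ be continuous, strictly increasing, and bounded; let Φ denote the standard normal CDF. Let A_n, B_n, C_n, D_n be sequences of real random variables with A_n ↔_f B_n and C_n ↔_f D_n. Then: (1) A_n + C_n ↔_f B_n + D_n provided B_n is bounded in probability; (2) A_n − C_n ↔_f B_n − D_n provided B_n is bounded in probability; (3) A_n·C_n ↔_f B_n·D_n provided B_n is positively log-bounded in probability; (4) min{A_n, C_n} ↔_f min{B_n, D_n}; and (5) for any fixed b ∈ (0,1), setting Clip_{a,b'}(x) := max{a, min{x, b'}} and g(x, y) := Clip_{0,∞}(Φ⁻¹(Clip_{0,b}(x) · Φ(y))), one has g(A_n, C_n) ↔_f g(B_n, D_n). -/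

import Mathlib

open MeasureTheory ProbabilityTheory Filter Topology Set ENNReal NNReal Real

/-- `X` f-converges to `Y`: `d_f(X_n, Y_n) = |f (X_n) - f (Y_n)| → 0` in probability. -/
def FConvergesTo (f : ℝ → ℝ) {Ω : Type*} [MeasurableSpace Ω] (μ : Measure Ω)
    (X Y : ℕ → Ω → ℝ) : Prop :=
  ∀ δ : ℝ, 0 < δ →
    Tendsto (fun n => μ {ω | δ < |f (X n ω) - f (Y n ω)|}) atTop (𝓝 0)

/-- `X` is bounded in probability. -/
def BoundedInProbability {Ω : Type*} [MeasurableSpace Ω] (μ : Measure Ω)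
    (X : ℕ → Ω → ℝ) : Prop :=
  ∀ ε : ℝ, 0 < ε → ∃ N : ℕ, ∃ c : ℝ, 0 < c ∧ ∀ n > N,
    μ {ω | ¬ (-c < X n ω ∧ X n ω < c)} < ENNReal.ofReal ε

/-- `X` is positively log-bounded in probability. -/
def PosLogBoundedInProbability {Ω : Type*} [MeasurableSpace Ω] (μ : Measure Ω)
    (X : ℕ → Ω → ℝ) : Prop :=
  ∀ ε : ℝ, 0 < ε → ∃ N : ℕ, ∃ c : ℝ, 1 < c ∧ ∀ n > N,
    μ {ω | ¬ (1 / c < X n ω ∧ X n ω < c)} < ENNReal.ofReal ε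

/-- The standard normal CDF `Φ`. -/
noncomputable def stdGaussianCDF (x : ℝ) : ℝ := ((gaussianReal 0 1) (Set.Iic x)).toReal

/-- The inverse standard normal CDF on `(0, 1)` (with the convention, matching
`Φ⁻¹(0) = −∞` after clipping at `0`, that it is junk `0` for arguments `≤ 0`). -/
noncomputable def stdGaussianCDFInv (p : ℝ) : ℝ := sSup {z : ℝ | stdGaussianCDF z ≤ p}



noncomputable def extendER (f : ℝ → ℝ) (l u : ℝ) : EReal → ℝ :=
  fun x => if x = ⊥ then l else if x = ⊤ then u else f x.toReal

@[simp] lemma extendER_coe (f : ℝ → ℝ) (l u x : ℝ) : extendER f l u ↑x = f x := by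
  simp [extendER, EReal.coe_ne_bot]

@[simp] lemma extendER_bot (f : ℝ → ℝ) (l u : ℝ) : extendER f l u ⊥ = l := by simp [extendER]

@[simp] lemma extendER_top (f : ℝ → ℝ) (l u : ℝ) : extendER f l u ⊤ = u := by simp [extendER]

lemma extendER_continuous {f : ℝ → ℝ} {l u : ℝ} (hc : Continuous f)
    (hl : Tendsto f atBot (𝓝 l)) (hu : Tendsto f atTop (𝓝 u)) :
    Continuous (extendER f l u) := by
  rw [continuous_iff_continuousAt]
  intro x
  induction x using EReal.rec with
  | bot =>
    rw [ContinuousAt, extendER_bot, Metric.tendsto_nhds]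
    intro ε hε
    obtain ⟨M, hM⟩ := Filter.eventually_atBot.1 (Metric.tendsto_nhds.1 hl ε hε)
    rw [EReal.nhds_bot_basis.eventually_iff]
    refine ⟨M, trivial, fun y hy => ?_⟩
    induction y using EReal.rec with
    | bot => simpa [extendER_bot] using hε
    | coe y => simp only [extendER_coe]; exact hM y (le_of_lt (EReal.coe_lt_coe_iff.1 hy))
    | top => exact absurd hy (by simp)
  | top =>
    rw [ContinuousAt, extendER_top, Metric.tendsto_nhds]
    intro ε hε
    obtain ⟨M, hM⟩ := Filter.eventually_atTop.1 (Metric.tendsto_nhds.1 hu ε hε)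
    rw [EReal.nhds_top_basis.eventually_iff]
    refine ⟨M, trivial, fun y hy => ?_⟩
    induction y using EReal.rec with
    | top => simpa [extendER_top] using hε
    | coe y => simp only [extendER_coe]; exact hM y (le_of_lt (EReal.coe_lt_coe_iff.1 hy))
    | bot => exact absurd hy (by simp)
  | coe x =>
    rw [ContinuousAt, EReal.nhds_coe, tendsto_map'_iff]
    have : (extendER f l u ∘ (↑) : ℝ → ℝ) = f := funext fun y => extendER_coe f l u y
    rw [this, extendER_coe]
    exact hc.tendsto x

lemma extendER_strictMono {f : ℝ → ℝ} {l u : ℝ} (hm : StrictMono f)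
    (hl : ∀ x, l < f x) (hu : ∀ x, f x < u) : StrictMono (extendER f l u) := by
  intro a b hab
  induction a using EReal.rec with
  | bot =>
    induction b using EReal.rec with
    | bot => exact absurd hab (lt_irrefl _)
    | coe b => simpa using hl b
    | top => simpa using (hl 0).trans (hu 0)
  | coe a =>
    induction b using EReal.rec with
    | bot => exact absurd hab (by simp)
    | coe b => simpa using hm (EReal.coe_lt_coe_iff.1 hab)
    | top => simpa using hu a
  | top => exact absurd hab (by simp)

lemma masterUC {F : EReal → ℝ} (hFc : Continuous F) (hFi : Function.Injective F)
    {S : Set (EReal × EReal)} (hS : IsCompact S) {H : EReal × EReal → ℝ}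
    (hH : ContinuousOn H S) {δ : ℝ} (hδ : 0 < δ) :
    ∃ η > 0, ∀ p q : EReal × EReal, p ∈ S → q ∈ S →
      |F p.1 - F q.1| ≤ η → |F p.2 - F q.2| ≤ η → |H p - H q| ≤ δ := by
  classical
  set de : (EReal × EReal) × (EReal × EReal) → ℝ :=
    fun x => max |F x.1.1 - F x.2.1| |F x.1.2 - F x.2.2| with hde
  have hdec : Continuous de := by
    apply Continuous.max
    · exact ((hFc.comp (continuous_fst.comp continuous_fst)).sub
        (hFc.comp (continuous_fst.comp continuous_snd))).abs
    · exact ((hFc.comp (continuous_snd.comp continuous_fst)).sub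
        (hFc.comp (continuous_snd.comp continuous_snd))).abs
  set T : Set ((EReal × EReal) × (EReal × EReal)) :=
    (S ×ˢ S) ∩ (fun x : (EReal × EReal) × (EReal × EReal) => |H x.1 - H x.2|) ⁻¹' Ici δ with hT
  have hSS : IsCompact (S ×ˢ S) := hS.prod hS
  have hcont : ContinuousOn (fun x : (EReal × EReal) × (EReal × EReal) => |H x.1 - H x.2|)
      (S ×ˢ S) := by
    apply ContinuousOn.abs
    exact (hH.comp continuous_fst.continuousOn fun x hx => hx.1).sub
      (hH.comp continuous_snd.continuousOn fun x hx => hx.2)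
  have hTclosed : IsClosed T := hcont.preimage_isClosed_of_isClosed hSS.isClosed isClosed_Ici
  have hTcomp : IsCompact T := hSS.of_isClosed_subset hTclosed inter_subset_left
  by_cases hne : T.Nonempty
  · obtain ⟨x₀, hx₀, hmin⟩ := hTcomp.exists_isMinOn hne hdec.continuousOn
    have hpos : 0 < de x₀ := by
      rcases lt_or_eq_of_le (le_max_iff.2 (Or.inl (abs_nonneg _)) : (0:ℝ) ≤ de x₀) with h | h
      · exact h
      exfalso
      have h1 : |F x₀.1.1 - F x₀.2.1| = 0 := le_antisymm (h ▸ le_max_left _ _) (abs_nonneg _)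
      have h2 : |F x₀.1.2 - F x₀.2.2| = 0 := le_antisymm (h ▸ le_max_right _ _) (abs_nonneg _)
      have e1 : x₀.1.1 = x₀.2.1 := hFi (by linarith [abs_eq_zero.1 h1])
      have e2 : x₀.1.2 = x₀.2.2 := hFi (by linarith [abs_eq_zero.1 h2])
      have heq : x₀.1 = x₀.2 := Prod.ext e1 e2
      have hIci : δ ≤ |H x₀.1 - H x₀.2| := hx₀.2
      rw [heq, sub_self, abs_zero] at hIci
      linarith
    refine ⟨de x₀ / 2, by linarith, fun p q hp hq h1 h2 => ?_⟩
    by_contra hgt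
    have hmem : (p, q) ∈ T := ⟨⟨hp, hq⟩, Set.mem_preimage.2 (le_of_lt (not_le.1 hgt))⟩
    have hle' : de x₀ ≤ de (p, q) := hmin hmem
    have hlt : de (p, q) ≤ de x₀ / 2 := max_le h1 h2
    linarith
  · refine ⟨1, one_pos, fun p q hp hq _ _ => ?_⟩
    by_contra h
    exact hne ⟨(p, q), ⟨⟨hp, hq⟩, Set.mem_preimage.2 (le_of_lt (not_le.1 h))⟩⟩


section ClipER

noncomputable def clipER (b : ℝ) (x : EReal) : ℝ := (max 0 (min x ↑b)).toReal

lemma clipER_coe (b a : ℝ) : clipER b ↑a = max 0 (min a b) := by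
  rw [clipER, ← EReal.coe_strictMono.monotone.map_min (a := a) (b := b),
    show (0 : EReal) = ((0:ℝ) : EReal) from rfl,
    ← EReal.coe_strictMono.monotone.map_max, EReal.toReal_coe]

lemma clipER_aux_le (b : ℝ) (x : EReal) : max 0 (min x ↑b) ≤ ((max 0 b : ℝ) : EReal) := by
  have h : ((max 0 b : ℝ) : EReal) = max ((0:ℝ) : EReal) ((b : ℝ) : EReal) :=
    EReal.coe_strictMono.monotone.map_max
  rw [h]
  exact max_le_max le_rfl (min_le_right _ _)

lemma clipER_aux_ne_top (b : ℝ) (x : EReal) : max 0 (min x ↑b) ≠ ⊤ :=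
  ne_top_of_le_ne_top (EReal.coe_ne_top _) (clipER_aux_le b x)

lemma clipER_aux_ne_bot (b : ℝ) (x : EReal) : max 0 (min x ↑b) ≠ ⊥ :=
  (EReal.bot_lt_zero.trans_le (le_max_left _ _)).ne'

lemma clipER_continuous (b : ℝ) : Continuous (clipER b) := by
  have hm : Continuous (fun x : EReal => max 0 (min x ↑b)) :=
    continuous_const.max (continuous_id.min continuous_const)
  rw [continuous_iff_continuousAt]
  intro x
  exact (EReal.tendsto_toReal (clipER_aux_ne_top b x) (clipER_aux_ne_bot b x)).comp
    hm.continuousAt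

lemma clipER_nonneg (b : ℝ) (x : EReal) : 0 ≤ clipER b x := by
  rw [clipER, ← EReal.toReal_zero]
  exact EReal.toReal_le_toReal (le_max_left _ _) EReal.zero_ne_bot (clipER_aux_ne_top b x)

lemma clipER_le (b : ℝ) (hb : 0 ≤ b) (x : EReal) : clipER b x ≤ b := by
  rw [clipER, show b = EReal.toReal ((b : ℝ) : EReal) from (EReal.toReal_coe b).symm]
  apply EReal.toReal_le_toReal _ (clipER_aux_ne_bot b x) (EReal.coe_ne_top b)
  exact max_le (by exact_mod_cast hb) (min_le_right _ _)

end ClipER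


lemma skeleton {f : ℝ → ℝ} {Ω : Type*} [MeasurableSpace Ω] {μ : Measure Ω}
    {A B C D : ℕ → Ω → ℝ} (G : ℝ → ℝ → ℝ)
    (hAB : FConvergesTo f μ A B) (hCD : FConvergesTo f μ C D)
    (key : ∀ δ : ℝ, 0 < δ → ∀ ε : ℝ, 0 < ε → ∃ (N : ℕ) (η : ℝ) (K : Set ℝ), 0 < η ∧
      (∀ n, N < n → μ {ω | B n ω ∉ K} < ENNReal.ofReal ε) ∧
      (∀ a b c d : ℝ, b ∈ K → |f a - f b| ≤ η → |f c - f d| ≤ η →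
        |f (G a c) - f (G b d)| ≤ δ)) :
    FConvergesTo f μ (fun n ω => G (A n ω) (C n ω)) (fun n ω => G (B n ω) (D n ω)) := by
  intro δ hδ
  rw [ENNReal.tendsto_atTop_zero]
  intro ε' hε'
  -- choose a real ε with 0 < ε and ofReal ε ≤ ε'
  obtain ⟨r, hr, hrle⟩ : ∃ r : ℝ, 0 < r ∧ ENNReal.ofReal r ≤ ε' := by
    rcases eq_or_ne ε' ⊤ with h | h
    · exact ⟨1, one_pos, h ▸ le_top⟩
    · refine ⟨min 1 ε'.toReal, lt_min one_pos (ENNReal.toReal_pos hε'.ne' h), ?_⟩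
      calc ENNReal.ofReal (min 1 ε'.toReal) ≤ ENNReal.ofReal ε'.toReal :=
            ENNReal.ofReal_le_ofReal (min_le_right _ _)
        _ = ε' := ENNReal.ofReal_toReal h
  obtain ⟨N₁, η, K, hη, hBK, hkey⟩ := key δ hδ (r / 3) (by linarith)
  have h3 : (0:ℝ≥0∞) < ENNReal.ofReal (r / 3) := ENNReal.ofReal_pos.2 (by linarith)
  obtain ⟨N₂, hN₂⟩ := Filter.eventually_atTop.1 ((hAB η hη).eventually (gt_mem_nhds h3))
  obtain ⟨N₃, hN₃⟩ := Filter.eventually_atTop.1 ((hCD η hη).eventually (gt_mem_nhds h3))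
  refine ⟨max (N₁ + 1) (max N₂ N₃), fun n hn => ?_⟩
  have hn1 : N₁ < n := lt_of_lt_of_le (Nat.lt_succ_self _) (le_trans (le_max_left _ _) hn)
  have hn2 : N₂ ≤ n := le_trans (le_trans (le_max_left _ _) (le_max_right _ _)) hn
  have hn3 : N₃ ≤ n := le_trans (le_trans (le_max_right _ _) (le_max_right _ _)) hn
  have hsub : {ω | δ < |f (G (A n ω) (C n ω)) - f (G (B n ω) (D n ω))|} ⊆
      {ω | B n ω ∉ K} ∪ ({ω | η < |f (A n ω) - f (B n ω)|} ∪
        {ω | η < |f (C n ω) - f (D n ω)|}) := by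
    intro ω hω
    by_contra hc
    simp only [Set.mem_union, Set.mem_setOf_eq, not_or, not_lt, not_not] at hc
    obtain ⟨h1, h2, h3⟩ := hc
    exact absurd (hkey _ _ _ _ h1 h2 h3) (not_le.2 hω)
  calc μ {ω | δ < |f (G (A n ω) (C n ω)) - f (G (B n ω) (D n ω))|}
      ≤ μ ({ω | B n ω ∉ K}) + (μ {ω | η < |f (A n ω) - f (B n ω)|} +
        μ {ω | η < |f (C n ω) - f (D n ω)|}) :=
        le_trans (measure_mono hsub) (le_trans (measure_union_le _ _)
          (add_le_add le_rfl (measure_union_le _ _)))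
    _ ≤ ENNReal.ofReal (r/3) + (ENNReal.ofReal (r/3) + ENNReal.ofReal (r/3)) := by
        exact add_le_add (le_of_lt (hBK n hn1))
          (add_le_add (le_of_lt (hN₂ n hn2)) (le_of_lt (hN₃ n hn3)))
    _ = ENNReal.ofReal r := by
        rw [← ENNReal.ofReal_add (by linarith) (by linarith),
          ← ENNReal.ofReal_add (by linarith) (by linarith)]
        ring_nf
    _ ≤ ε' := hrle






lemma stdGaussianCDF_eq (x : ℝ) :
    stdGaussianCDF x = ∫ t in Set.Iic x, gaussianPDFReal 0 1 t := by
  rw [stdGaussianCDF, gaussianReal_apply_eq_integral 0 one_ne_zero,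
    ENNReal.toReal_ofReal]
  exact setIntegral_nonneg measurableSet_Iic fun t _ => gaussianPDFReal_nonneg 0 1 t

lemma gaussianPDFReal_le_one (t : ℝ) : gaussianPDFReal 0 1 t ≤ 1 := by
  rw [gaussianPDFReal]
  rw [NNReal.coe_one, mul_one, mul_one, sub_zero]
  have h1 : (1:ℝ) ≤ √(2 * π) := by
    rw [Real.one_le_sqrt]
    nlinarith [Real.pi_gt_three]
  have h2 : Real.exp (-t ^ 2 / 2) ≤ 1 := by
    rw [Real.exp_le_one_iff]
    nlinarith [sq_nonneg t]
  calc (√(2 * π))⁻¹ * Real.exp (-t ^ 2 / 2)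
      ≤ 1 * 1 := mul_le_mul (inv_le_one_of_one_le₀ h1) h2 (Real.exp_nonneg _) zero_le_one
    _ = 1 := by norm_num

lemma stdGaussianCDF_add_Ioc {x y : ℝ} (hxy : x ≤ y) :
    stdGaussianCDF y = stdGaussianCDF x + ∫ t in Set.Ioc x y, gaussianPDFReal 0 1 t := by
  rw [stdGaussianCDF_eq, stdGaussianCDF_eq, ← Set.Iic_union_Ioc_eq_Iic hxy]
  rw [setIntegral_union]
  · exact Set.Iic_disjoint_Ioc le_rfl
  · exact measurableSet_Ioc
  · exact (integrable_gaussianPDFReal 0 1).integrableOn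
  · exact (integrable_gaussianPDFReal 0 1).integrableOn

lemma stdGaussianCDF_strictMono : StrictMono stdGaussianCDF := by
  intro x y hxy
  rw [stdGaussianCDF_add_Ioc hxy.le]
  have hpos : 0 < ∫ t in Set.Ioc x y, gaussianPDFReal 0 1 t := by
    rw [← intervalIntegral.integral_of_le hxy.le]
    apply intervalIntegral.intervalIntegral_pos_of_pos_on
    · exact (integrable_gaussianPDFReal 0 1).intervalIntegrable
    · exact fun t _ => gaussianPDFReal_pos 0 1 t one_ne_zero
    · exact hxy
  linarith

lemma stdGaussianCDF_lipschitz : LipschitzWith 1 stdGaussianCDF := by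
  apply LipschitzWith.of_dist_le_mul
  intro x y
  wlog hxy : y ≤ x generalizing x y
  · rw [dist_comm, dist_comm x y]; exact this y x (le_of_not_ge hxy)
  rw [Real.dist_eq, Real.dist_eq, stdGaussianCDF_add_Ioc hxy]
  have h0 : 0 ≤ ∫ t in Set.Ioc y x, gaussianPDFReal 0 1 t :=
    setIntegral_nonneg measurableSet_Ioc fun t _ => gaussianPDFReal_nonneg 0 1 t
  have hle : (∫ t in Set.Ioc y x, gaussianPDFReal 0 1 t) ≤ x - y := by
    calc (∫ t in Set.Ioc y x, gaussianPDFReal 0 1 t)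
        ≤ ∫ _ in Set.Ioc y x, (1:ℝ) := by
          apply setIntegral_mono_on (integrable_gaussianPDFReal 0 1).integrableOn
            (integrableOn_const (by rw [Real.volume_Ioc]; exact ENNReal.ofReal_ne_top))
            measurableSet_Ioc
          exact fun t _ => gaussianPDFReal_le_one t
      _ = x - y := by
          rw [setIntegral_const, smul_eq_mul, mul_one, Real.volume_real_Ioc_of_le hxy]
  rw [abs_of_nonneg (by linarith : (0:ℝ) ≤ stdGaussianCDF y + _ - stdGaussianCDF y),
    abs_of_nonneg (by linarith : (0:ℝ) ≤ x - y)]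
  simpa using hle

lemma stdGaussianCDF_continuous : Continuous stdGaussianCDF :=
  stdGaussianCDF_lipschitz.continuous

lemma stdGaussianCDF_mem_Icc (x : ℝ) : stdGaussianCDF x ∈ Set.Icc (0:ℝ) 1 := by
  constructor
  · exact ENNReal.toReal_nonneg
  · rw [stdGaussianCDF]
    apply ENNReal.toReal_le_of_le_ofReal zero_le_one
    simpa using prob_le_one

lemma stdGaussianCDF_tendsto_atTop : Tendsto stdGaussianCDF atTop (𝓝 1) := by
  have h := tendsto_measure_Iic_atTop (μ := gaussianReal 0 1)
  rw [measure_univ] at h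
  have := (ENNReal.tendsto_toReal (by norm_num : (1:ℝ≥0∞) ≠ ⊤)).comp h
  exact this

lemma stdGaussianCDF_tendsto_atBot : Tendsto stdGaussianCDF atBot (𝓝 0) := by
  set μ := gaussianReal 0 1
  have hg : Tendsto (fun x : ℝ => (μ (Set.Ici (x + 1))).toReal) atBot (𝓝 1) := by
    have h := tendsto_measure_Ici_atBot μ
    rw [measure_univ] at h
    have h2 := (ENNReal.tendsto_toReal (by norm_num : (1:ℝ≥0∞) ≠ ⊤)).comp h
    have h3 : Tendsto (fun x : ℝ => x + 1) atBot atBot := tendsto_atBot_add_const_right _ 1 tendsto_id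
    simpa [Function.comp_def] using h2.comp h3
  have hupper : ∀ x : ℝ, stdGaussianCDF x ≤ 1 - (μ (Set.Ici (x + 1))).toReal := by
    intro x
    have hdisj : Disjoint (Set.Iic x) (Set.Ici (x + 1)) :=
      Set.Iic_disjoint_Ici.2 (by linarith)
    have hle : μ (Set.Iic x ∪ Set.Ici (x + 1)) ≤ 1 := prob_le_one
    rw [measure_union hdisj measurableSet_Ici] at hle
    have := ENNReal.toReal_mono one_ne_top hle
    rw [ENNReal.toReal_add (measure_ne_top _ _) (measure_ne_top _ _), ENNReal.toReal_one] at this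
    rw [stdGaussianCDF]
    linarith
  have hlow : ∀ x : ℝ, (0:ℝ) ≤ stdGaussianCDF x := fun x => ENNReal.toReal_nonneg
  have hub : Tendsto (fun x : ℝ => 1 - (μ (Set.Ici (x + 1))).toReal) atBot (𝓝 0) := by
    have := (tendsto_const_nhds (x := (1:ℝ)) (f := atBot)).sub hg
    simpa using this
  exact tendsto_of_tendsto_of_tendsto_of_le_of_le tendsto_const_nhds hub
    (fun x => hlow x) (fun x => hupper x)

lemma stdGaussianCDF_pos (x : ℝ) : 0 < stdGaussianCDF x := by
  have := stdGaussianCDF_strictMono (show x - 1 < x by linarith)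
  have := (stdGaussianCDF_mem_Icc (x-1)).1
  linarith

lemma stdGaussianCDF_lt_one (x : ℝ) : stdGaussianCDF x < 1 := by
  have := stdGaussianCDF_strictMono (show x < x + 1 by linarith)
  have := (stdGaussianCDF_mem_Icc (x+1)).2
  linarith

lemma stdGaussianCDF_surjOn {p : ℝ} (h0 : 0 < p) (h1 : p < 1) :
    ∃ z : ℝ, stdGaussianCDF z = p := by
  obtain ⟨x₁, hx₁⟩ := (stdGaussianCDF_tendsto_atBot.eventually (gt_mem_nhds h0)).exists
  obtain ⟨x₂, hx₂⟩ := (stdGaussianCDF_tendsto_atTop.eventually (lt_mem_nhds h1)).exists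
  have hx : x₁ ≤ x₂ := by
    by_contra hc
    exact absurd (stdGaussianCDF_strictMono (lt_of_not_ge hc)) (by linarith)
  obtain ⟨z, _, hz⟩ := intermediate_value_Icc hx stdGaussianCDF_continuous.continuousOn
    (Set.mem_Icc.2 ⟨hx₁.le, hx₂.le⟩)
  exact ⟨z, hz⟩

lemma stdGaussianCDFInv_spec {p : ℝ} (h0 : 0 < p) (h1 : p < 1) :
    stdGaussianCDF (stdGaussianCDFInv p) = p := by
  obtain ⟨z, hz⟩ := stdGaussianCDF_surjOn h0 h1
  have hset : {z' : ℝ | stdGaussianCDF z' ≤ p} = Set.Iic z := by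
    ext z'
    simp only [Set.mem_setOf_eq, Set.mem_Iic, ← hz]
    exact stdGaussianCDF_strictMono.le_iff_le
  rw [stdGaussianCDFInv, hset, csSup_Iic, hz]

lemma stdGaussianCDFInv_nonpos {p : ℝ} (hp : p ≤ 0) : stdGaussianCDFInv p = 0 := by
  have hset : {z' : ℝ | stdGaussianCDF z' ≤ p} = ∅ := by
    ext z'
    simp only [Set.mem_setOf_eq, Set.mem_empty_iff_false, iff_false, not_le]
    exact lt_of_le_of_lt hp (stdGaussianCDF_pos z')
  rw [stdGaussianCDFInv, hset, Real.sSup_empty]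

lemma stdGaussianCDFInv_continuousAt {p : ℝ} (h0 : 0 < p) (h1 : p < 1) :
    ContinuousAt stdGaussianCDFInv p := by
  rw [ContinuousAt]
  set z := stdGaussianCDFInv p with hz
  have hΦz : stdGaussianCDF z = p := stdGaussianCDFInv_spec h0 h1
  rw [tendsto_order]
  constructor
  · intro z' hz'
    have hlt : stdGaussianCDF z' < p := hΦz ▸ stdGaussianCDF_strictMono hz'
    have hmem : Set.Ioo (stdGaussianCDF z') 1 ∈ 𝓝 p := Ioo_mem_nhds hlt h1
    filter_upwards [hmem] with q hq
    have hq0 : 0 < q := lt_trans (stdGaussianCDF_pos z') hq.1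
    have := stdGaussianCDFInv_spec hq0 hq.2
    by_contra hc
    push_neg at hc
    exact absurd (this ▸ stdGaussianCDF_strictMono.monotone hc) (not_le.2 hq.1)
  · intro z' hz'
    have hlt : p < stdGaussianCDF z' := hΦz ▸ stdGaussianCDF_strictMono hz'
    have hmem : Set.Ioo (0:ℝ) (stdGaussianCDF z') ∈ 𝓝 p := Ioo_mem_nhds h0 hlt
    filter_upwards [hmem] with q hq
    have hq1 : q < 1 := lt_trans hq.2 (stdGaussianCDF_lt_one z')
    have := stdGaussianCDFInv_spec hq.1 hq1
    by_contra hc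
    push_neg at hc
    exact absurd (this ▸ stdGaussianCDF_strictMono.monotone hc) (not_le.2 hq.2)

lemma clippedInv_continuousAt {p : ℝ} (h0 : 0 < p) (h1 : p < 1) :
    ContinuousAt (fun q => max 0 (stdGaussianCDFInv q)) p :=
  (continuous_const.max continuous_id).continuousAt.comp
    (stdGaussianCDFInv_continuousAt h0 h1)

lemma clippedInv_continuousWithinAt :
    ContinuousWithinAt (fun q => max 0 (stdGaussianCDFInv q)) (Set.Ici 0) 0 := by
  rw [ContinuousWithinAt]
  have h00 : max 0 (stdGaussianCDFInv 0) = 0 := by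
    rw [stdGaussianCDFInv_nonpos le_rfl, max_self]
  rw [h00, tendsto_order]
  constructor
  · intro a ha
    filter_upwards with q
    exact lt_of_lt_of_le ha (le_max_left _ _)
  · intro a ha
    have hmem1 : Set.Iio (stdGaussianCDF (a/2)) ∈ 𝓝[Set.Ici 0] (0:ℝ) :=
      nhdsWithin_le_nhds (Iio_mem_nhds (stdGaussianCDF_pos (a/2)))
    filter_upwards [hmem1, self_mem_nhdsWithin] with q hq1 hq2
    rcases le_or_gt q 0 with hq0 | hq0
    · rw [stdGaussianCDFInv_nonpos hq0, max_self]; linarith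
    · have hqlt : q < 1 := lt_trans hq1 (stdGaussianCDF_lt_one _)
      have hspec := stdGaussianCDFInv_spec hq0 hqlt
      have : stdGaussianCDFInv q < a / 2 := by
        by_contra hc
        push_neg at hc
        exact absurd (hspec ▸ stdGaussianCDF_strictMono.monotone hc) (not_le.2 hq1)
      calc max 0 (stdGaussianCDFInv q) ≤ max 0 (a/2) := max_le_max le_rfl this.le
        _ = a / 2 := max_eq_right (by linarith)
        _ < a := by linarith


lemma key_op {f : ℝ → ℝ} {l u : ℝ} (hFc : Continuous (extendER f l u))
    (hFi : Function.Injective (extendER f l u))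
    {K' : Set ℝ} (hK' : IsCompact K')
    {G : ℝ → ℝ → ℝ} {G' : EReal × EReal → EReal}
    (hG'c : ∀ x : ℝ, x ∈ K' → ∀ y : EReal, ContinuousAt G' (↑x, y))
    (hagree : ∀ a c : ℝ, a ∈ K' → G' (↑a, ↑c) = ((G a c : ℝ) : EReal))
    {δ : ℝ} (hδ : 0 < δ) :
    ∃ η > 0, ∀ a b c d : ℝ, a ∈ K' → b ∈ K' → |f a - f b| ≤ η → |f c - f d| ≤ η →
      |f (G a c) - f (G b d)| ≤ δ := by
  set F := extendER f l u with hF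
  set S : Set (EReal × EReal) := ((↑) '' K') ×ˢ (univ : Set EReal) with hS
  have hScomp : IsCompact S := (hK'.image continuous_coe_real_ereal).prod isCompact_univ
  have hH : ContinuousOn (fun p => F (G' p)) S := by
    intro p hp
    obtain ⟨⟨x, hxK, hxe⟩, -⟩ := hp
    have hc : ContinuousAt G' p := by
      have h := hG'c x hxK p.2
      rwa [show ((x : EReal), p.2) = p from Prod.ext hxe rfl] at h
    exact (hFc.continuousAt.comp hc).continuousWithinAt
  obtain ⟨η, hη, hmaster⟩ := masterUC hFc hFi hScomp hH hδ
  refine ⟨η, hη, fun a b c d ha hb h1 h2 => ?_⟩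
  have hpa : ((a : EReal), (c : EReal)) ∈ S := ⟨⟨a, ha, rfl⟩, trivial⟩
  have hpb : ((b : EReal), (d : EReal)) ∈ S := ⟨⟨b, hb, rfl⟩, trivial⟩
  have h := hmaster _ _ hpa hpb (by simpa [hF] using h1) (by simpa [hF] using h2)
  simpa [hagree a c ha, hagree b d hb, hF] using h

lemma mem_of_close {f : ℝ → ℝ} (hm : StrictMono f) {lo hi lo' hi' a b η : ℝ}
    (hblo : lo < b) (hbhi : b < hi) (hlo : lo' < lo) (hhi : hi < hi')
    (hη : η ≤ min (f hi' - f hi) (f lo - f lo'))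
    (hc : |f a - f b| ≤ η) : lo' ≤ a ∧ a ≤ hi' := by
  obtain ⟨hc1, hc2⟩ := abs_le.1 hc
  have h1 := hm hblo
  have h2 := hm hbhi
  have h3 := min_le_left (f hi' - f hi) (f lo - f lo')
  have h4 := min_le_right (f hi' - f hi) (f lo - f lo')
  constructor
  · exact hm.le_iff_le.1 (by linarith)
  · exact hm.le_iff_le.1 (by linarith)


theorem concrete_f_convergence_composition_rules
    (f : ℝ → ℝ) (hf_cont : Continuous f) (hf_mono : StrictMono f)
    (hf_bdd : ∃ K : ℝ, ∀ x, |f x| ≤ K)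
    {Ω : Type*} [MeasurableSpace Ω] (μ : Measure Ω) [IsProbabilityMeasure μ]
    (A B C D : ℕ → Ω → ℝ)
    (hAB : FConvergesTo f μ A B) (hCD : FConvergesTo f μ C D) :
    (BoundedInProbability μ B →
      FConvergesTo f μ (fun n ω => A n ω + C n ω) (fun n ω => B n ω + D n ω)) ∧
    (BoundedInProbability μ B →
      FConvergesTo f μ (fun n ω => A n ω - C n ω) (fun n ω => B n ω - D n ω)) ∧
    (PosLogBoundedInProbability μ B →
      FConvergesTo f μ (fun n ω => A n ω * C n ω) (fun n ω => B n ω * D n ω)) ∧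
    (FConvergesTo f μ (fun n ω => min (A n ω) (C n ω)) (fun n ω => min (B n ω) (D n ω))) ∧
    (∀ b : ℝ, 0 < b → b < 1 →
      FConvergesTo f μ
        (fun n ω => max 0 (stdGaussianCDFInv (max 0 (min (A n ω) b)
          * stdGaussianCDF (C n ω))))
        (fun n ω => max 0 (stdGaussianCDFInv (max 0 (min (B n ω) b)
          * stdGaussianCDF (D n ω))))) := by
  classical
  obtain ⟨Kb, hKb⟩ := hf_bdd
  have hbddA : BddAbove (Set.range f) := ⟨Kb, by rintro y ⟨x, rfl⟩; exact (abs_le.1 (hKb x)).2⟩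
  have hbddB : BddBelow (Set.range f) := ⟨-Kb, by rintro y ⟨x, rfl⟩; exact (abs_le.1 (hKb x)).1⟩
  set u := ⨆ x, f x with hu_def
  set l := ⨅ x, f x with hl_def
  have hu : Tendsto f atTop (𝓝 u) := tendsto_atTop_ciSup hf_mono.monotone hbddA
  have hl : Tendsto f atBot (𝓝 l) := tendsto_atBot_ciInf hf_mono.monotone hbddB
  have hfu : ∀ x, f x < u := fun x =>
    lt_of_lt_of_le (hf_mono (lt_add_one x)) (le_ciSup hbddA (x + 1))
  have hfl : ∀ x, l < f x := fun x =>
    lt_of_le_of_lt (ciInf_le hbddB (x - 1)) (hf_mono (by linarith : x - 1 < x))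
  have hFc : Continuous (extendER f l u) := extendER_continuous hf_cont hl hu
  have hFi : Function.Injective (extendER f l u) :=
    (extendER_strictMono hf_mono hfl hfu).injective
  refine ⟨?_, ?_, ?_, ?_, ?_⟩
  -- (1) addition
  · intro hB
    apply skeleton (fun a c => a + c) hAB hCD
    intro δ hδ ε hε
    obtain ⟨N, c, hc, hbound⟩ := hB ε hε
    obtain ⟨η₁, hη₁, hkey⟩ := key_op (G := fun a c => a + c)
      (G' := fun p => p.1 + p.2) hFc hFi (isCompact_Icc (a := -(c+1)) (b := c+1))
      (fun x _ y => EReal.continuousAt_add (Or.inl (EReal.coe_ne_top x))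
        (Or.inl (EReal.coe_ne_bot x)))
      (fun a cc _ => (EReal.coe_add a cc).symm) hδ
    have hη₀ : 0 < min (f (c+1) - f c) (f (-c) - f (-(c+1))) :=
      lt_min (sub_pos.2 (hf_mono (by linarith))) (sub_pos.2 (hf_mono (by linarith)))
    refine ⟨N, min (min (f (c+1) - f c) (f (-c) - f (-(c+1)))) η₁, Ioo (-c) c,
      lt_min hη₀ hη₁, fun n hn => ?_, ?_⟩
    · have hset : {ω : Ω | B n ω ∉ Ioo (-c) c} = {ω | ¬ (-c < B n ω ∧ B n ω < c)} := by
        ext ω; simp [Set.mem_Ioo]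
      rw [hset]; exact hbound n hn
    · intro a b cc d hbK h1 h2
      obtain ⟨ha1, ha2⟩ := mem_of_close hf_mono hbK.1 hbK.2
        (by linarith : -(c+1) < -c) (by linarith : c < c+1) (min_le_left _ _) h1
      have hamem : a ∈ Icc (-(c+1)) (c+1) := ⟨ha1, ha2⟩
      have hbmem : b ∈ Icc (-(c+1)) (c+1) :=
        ⟨by linarith [hbK.1], by linarith [hbK.2]⟩
      exact hkey a b cc d hamem hbmem (le_trans h1 (min_le_right _ _))
        (le_trans h2 (min_le_right _ _))
  -- (2) subtraction
  · intro hB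
    apply skeleton (fun a c => a - c) hAB hCD
    intro δ hδ ε hε
    obtain ⟨N, c, hc, hbound⟩ := hB ε hε
    have hsub_eq : (fun p : EReal × EReal => p.1 - p.2) =
        (fun p : EReal × EReal => p.1 + p.2) ∘ (fun p : EReal × EReal => (p.1, -p.2)) := by
      funext p; simp [sub_eq_add_neg]
    obtain ⟨η₁, hη₁, hkey⟩ := key_op (G := fun a c => a - c)
      (G' := fun p => p.1 - p.2) hFc hFi (isCompact_Icc (a := -(c+1)) (b := c+1))
      (fun x _ y => by
        rw [hsub_eq]
        exact ContinuousAt.comp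
          (EReal.continuousAt_add (Or.inl (EReal.coe_ne_top x))
            (Or.inl (EReal.coe_ne_bot x)))
          (continuous_fst.prodMk continuous_snd.neg).continuousAt)
      (fun a cc _ => (EReal.coe_sub a cc).symm) hδ
    have hη₀ : 0 < min (f (c+1) - f c) (f (-c) - f (-(c+1))) :=
      lt_min (sub_pos.2 (hf_mono (by linarith))) (sub_pos.2 (hf_mono (by linarith)))
    refine ⟨N, min (min (f (c+1) - f c) (f (-c) - f (-(c+1)))) η₁, Ioo (-c) c,
      lt_min hη₀ hη₁, fun n hn => ?_, ?_⟩
    · have hset : {ω : Ω | B n ω ∉ Ioo (-c) c} = {ω | ¬ (-c < B n ω ∧ B n ω < c)} := by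
        ext ω; simp [Set.mem_Ioo]
      rw [hset]; exact hbound n hn
    · intro a b cc d hbK h1 h2
      obtain ⟨ha1, ha2⟩ := mem_of_close hf_mono hbK.1 hbK.2
        (by linarith : -(c+1) < -c) (by linarith : c < c+1) (min_le_left _ _) h1
      have hamem : a ∈ Icc (-(c+1)) (c+1) := ⟨ha1, ha2⟩
      have hbmem : b ∈ Icc (-(c+1)) (c+1) :=
        ⟨by linarith [hbK.1], by linarith [hbK.2]⟩
      exact hkey a b cc d hamem hbmem (le_trans h1 (min_le_right _ _))
        (le_trans h2 (min_le_right _ _))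
  -- (3) multiplication
  · intro hB
    apply skeleton (fun a c => a * c) hAB hCD
    intro δ hδ ε hε
    obtain ⟨N, c, hc, hbound⟩ := hB ε hε
    have hc0 : (0:ℝ) < c := by linarith
    have h2c0 : (0:ℝ) < 1 / (2 * c) := by positivity
    obtain ⟨η₁, hη₁, hkey⟩ := key_op (G := fun a c => a * c)
      (G' := fun p => p.1 * p.2) hFc hFi (isCompact_Icc (a := 1/(2*c)) (b := c+1))
      (fun x hx y => by
        have hx0 : x ≠ 0 := ne_of_gt (lt_of_lt_of_le h2c0 hx.1)
        exact EReal.continuousAt_mul (Or.inl (EReal.coe_ne_zero.2 hx0))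
          (Or.inl (EReal.coe_ne_zero.2 hx0)) (Or.inl (EReal.coe_ne_bot x))
          (Or.inl (EReal.coe_ne_top x)))
      (fun a cc _ => (EReal.coe_mul a cc).symm) hδ
    have hlo : 1 / (2 * c) < 1 / c := by
      rw [div_lt_div_iff₀ (by positivity) hc0]
      linarith
    have hη₀ : 0 < min (f (c+1) - f c) (f (1/c) - f (1/(2*c))) :=
      lt_min (sub_pos.2 (hf_mono (by linarith))) (sub_pos.2 (hf_mono hlo))
    refine ⟨N, min (min (f (c+1) - f c) (f (1/c) - f (1/(2*c)))) η₁, Ioo (1/c) c,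
      lt_min hη₀ hη₁, fun n hn => ?_, ?_⟩
    · have hset : {ω : Ω | B n ω ∉ Ioo (1/c) c} = {ω | ¬ (1/c < B n ω ∧ B n ω < c)} := by
        ext ω; simp [Set.mem_Ioo]
      rw [hset]; exact hbound n hn
    · intro a b cc d hbK h1 h2
      obtain ⟨ha1, ha2⟩ := mem_of_close hf_mono hbK.1 hbK.2 hlo
        (by linarith : c < c+1) (min_le_left _ _) h1
      have hamem : a ∈ Icc (1/(2*c)) (c+1) := ⟨ha1, ha2⟩
      have hbmem : b ∈ Icc (1/(2*c)) (c+1) :=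
        ⟨by linarith [hbK.1], by linarith [hbK.2]⟩
      exact hkey a b cc d hamem hbmem (le_trans h1 (min_le_right _ _))
        (le_trans h2 (min_le_right _ _))
  -- (4) minimum
  · apply skeleton (fun a c => min a c) hAB hCD
    intro δ hδ ε hε
    refine ⟨0, δ, univ, hδ, fun n hn => ?_, ?_⟩
    · have hset : {ω : Ω | B n ω ∉ (univ : Set ℝ)} = ∅ := by simp
      rw [hset, measure_empty]
      exact ENNReal.ofReal_pos.2 hε
    · intro a b cc d _ h1 h2
      have hmm := abs_min_sub_min_le_max (f a) (f cc) (f b) (f d)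
      rw [← hf_mono.monotone.map_min, ← hf_mono.monotone.map_min] at hmm
      exact le_trans hmm (max_le h1 h2)
  -- (5) clipped truncated-normal-quantile composition
  · intro b hb0 hb1
    apply skeleton
      (fun a c => max 0 (stdGaussianCDFInv (max 0 (min a b) * stdGaussianCDF c))) hAB hCD
    intro δ hδ ε hε
    set Φb := extendER stdGaussianCDF 0 1 with hΦb
    have hΦbc : Continuous Φb := extendER_continuous stdGaussianCDF_continuous
      stdGaussianCDF_tendsto_atBot stdGaussianCDF_tendsto_atTop
    have hΦb0 : ∀ y, 0 ≤ Φb y := by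
      intro y
      induction y using EReal.rec with
      | bot => simp [hΦb]
      | coe y => rw [hΦb, extendER_coe]; exact (stdGaussianCDF_mem_Icc y).1
      | top => simp [hΦb]
    have hΦb1 : ∀ y, Φb y ≤ 1 := by
      intro y
      induction y using EReal.rec with
      | bot => simp [hΦb]
      | coe y => rw [hΦb, extendER_coe]; exact (stdGaussianCDF_mem_Icc y).2
      | top => simp [hΦb]
    set q : EReal × EReal → ℝ := fun p => clipER b p.1 * Φb p.2 with hq
    have hqc : Continuous q :=
      ((clipER_continuous b).comp continuous_fst).mul (hΦbc.comp continuous_snd)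
    have hq0 : ∀ p, 0 ≤ q p := fun p => mul_nonneg (clipER_nonneg b p.1) (hΦb0 p.2)
    have hqb : ∀ p, q p ≤ b := fun p =>
      le_trans (mul_le_of_le_one_right (clipER_nonneg b p.1) (hΦb1 p.2))
        (clipER_le b hb0.le p.1)
    have hHc : Continuous (fun p : EReal × EReal =>
        f (max 0 (stdGaussianCDFInv (q p)))) := by
      rw [continuous_iff_continuousAt]
      intro p₀
      apply hf_cont.continuousAt.comp
      rcases eq_or_lt_of_le (hq0 p₀) with heq | hpos
      · have hcw : ContinuousWithinAt (fun t => max 0 (stdGaussianCDFInv t))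
            (Set.Ici 0) (q p₀) := by
          rw [← heq]; exact clippedInv_continuousWithinAt
        have hcomp := hcw.comp (hqc.continuousAt.continuousWithinAt (s := (univ : Set (EReal × EReal)))) (fun x _ => hq0 x)
        rwa [continuousWithinAt_univ] at hcomp
      · exact (clippedInv_continuousAt hpos (lt_of_le_of_lt (hqb p₀) hb1)).comp
          hqc.continuousAt
    obtain ⟨η, hη, hmaster⟩ := masterUC hFc hFi (isCompact_univ.prod isCompact_univ)
      hHc.continuousOn hδ
    refine ⟨0, η, univ, hη, fun n hn => ?_, ?_⟩
    · have hset : {ω : Ω | B n ω ∉ (univ : Set ℝ)} = ∅ := by simp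
      rw [hset, measure_empty]
      exact ENNReal.ofReal_pos.2 hε
    · intro a b' cc d _ h1 h2
      have h := hmaster ((a : EReal), (cc : EReal)) ((b' : EReal), (d : EReal))
        (by simp) (by simp) (by simpa using h1) (by simpa using h2)
      simpa [hq, clipER_coe, hΦb, extendER_coe] using h
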